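/- Let V be an open subset of ℝ³ = ℂ×ℝ and let v : V → ℝ be of class C². Then for every z = (z₁,z₂) ∈ π^{−1}(V) ⊂ ℝ⁴, Δ(v ∘ π)(z) = 4(|z₁|² + |z₂|²)·(Δv)(π(z)), where the Laplacian on the left is the Euclidean Laplacian on ℝ⁴ and on the right the Euclidean Laplacian on ℝ³. Equivalently, Δ(v ∘ π)(z) = 4|π(z)|·(Δv)(π(z)), since |π(z)| = |z₁|² + |z₂|². -/

import Mathlib

set_option maxHeartbeats 1000000


/-- The Laplacian (trace of the second derivative) of a real-valued function on a
finite-dimensional Euclidean space, computed in the standard orthonormal coordinates. -/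
noncomputable def lap {ι : Type*} [Fintype ι] [DecidableEq ι]
    (u : EuclideanSpace ℝ ι → ℝ) (x : EuclideanSpace ℝ ι) : ℝ :=
  ∑ i, iteratedFDeriv ℝ 2 u x ![EuclideanSpace.single i 1, EuclideanSpace.single i 1]

/-- The Hopf map π : ℝ⁴ = ℂ×ℂ → ℝ³ = ℂ×ℝ, π(z₁,z₂) = (2·conj(z₁)·z₂, |z₁|² − |z₂|²),
in real coordinates (z₁ = x₀ + i x₁, z₂ = x₂ + i x₃). -/
noncomputable def hopfC (x : EuclideanSpace ℝ (Fin 4)) : EuclideanSpace ℝ (Fin 3) :=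
  WithLp.toLp 2 (![(2 * (starRingEnd ℂ) (⟨x 0, x 1⟩ : ℂ) * (⟨x 2, x 3⟩ : ℂ)).re,
    (2 * (starRingEnd ℂ) (⟨x 0, x 1⟩ : ℂ) * (⟨x 2, x 3⟩ : ℂ)).im,
    ‖(⟨x 0, x 1⟩ : ℂ)‖ ^ 2 - ‖(⟨x 2, x 3⟩ : ℂ)‖ ^ 2])

lemma hopf0 (x : EuclideanSpace ℝ (Fin 4)) : hopfC x 0 = 2*(x 0 * x 2 + x 1 * x 3) := by
  simp [hopfC, Complex.mul_re, Complex.mul_im]; ring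
lemma hopf1 (x : EuclideanSpace ℝ (Fin 4)) : hopfC x 1 = 2*(x 0 * x 3 - x 1 * x 2) := by
  simp [hopfC, Complex.mul_re, Complex.mul_im]; ring
lemma hopf2 (x : EuclideanSpace ℝ (Fin 4)) : hopfC x 2 = x 0*x 0 + x 1*x 1 - x 2*x 2 - x 3*x 3 := by
  simp [hopfC, Complex.sq_norm, Complex.normSq_mk]; ring

noncomputable abbrev PP (i : Fin 4) : EuclideanSpace ℝ (Fin 4) →L[ℝ] ℝ := EuclideanSpace.proj i

noncomputable def rowD (z : EuclideanSpace ℝ (Fin 4)) : Fin 3 → (EuclideanSpace ℝ (Fin 4) →L[ℝ] ℝ) :=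
  ![(2*z 2) • PP 0 + (2*z 3) • PP 1 + (2*z 0) • PP 2 + (2*z 1) • PP 3,
    (2*z 3) • PP 0 - (2*z 2) • PP 1 - (2*z 1) • PP 2 + (2*z 0) • PP 3,
    (2*z 0) • PP 0 + (2*z 1) • PP 1 - (2*z 2) • PP 2 - (2*z 3) • PP 3]

noncomputable def Dz (z : EuclideanSpace ℝ (Fin 4)) : EuclideanSpace ℝ (Fin 4) →L[ℝ] EuclideanSpace ℝ (Fin 3) :=
  ((PiLp.continuousLinearEquiv 2 ℝ (fun _ : Fin 3 => ℝ)).symm :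
      (Fin 3 → ℝ) →L[ℝ] EuclideanSpace ℝ (Fin 3)).comp (ContinuousLinearMap.pi (rowD z))

lemma Dz_apply (z w : EuclideanSpace ℝ (Fin 4)) (a : Fin 3) : Dz z w a = rowD z a w := rfl

lemma hasFDerivAt_coord (z : EuclideanSpace ℝ (Fin 4)) (i : Fin 4) :
    HasFDerivAt (fun x : EuclideanSpace ℝ (Fin 4) => x i) (PP i) z := (PP i).hasFDerivAt

lemma hasFDerivAt_hopfC (z : EuclideanSpace ℝ (Fin 4)) : HasFDerivAt hopfC (Dz z) z := by
  set q : EuclideanSpace ℝ (Fin 4) → (Fin 3 → ℝ) := fun x i => hopfC x i with hq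
  have key : HasFDerivAt q (ContinuousLinearMap.pi (rowD z)) z := by
    apply hasFDerivAt_pi.2
    intro i
    fin_cases i
    · show HasFDerivAt (fun x => hopfC x 0) (rowD z 0) z
      simp only [hopf0]
      have h := (((hasFDerivAt_coord z 0).mul (hasFDerivAt_coord z 2)).add
        ((hasFDerivAt_coord z 1).mul (hasFDerivAt_coord z 3))).const_mul (2:ℝ)
      refine h.congr_fderiv ?_
      ext w; simp [rowD]; ring
    · show HasFDerivAt (fun x => hopfC x 1) (rowD z 1) z
      simp only [hopf1]
      have h := (((hasFDerivAt_coord z 0).mul (hasFDerivAt_coord z 3)).sub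
        ((hasFDerivAt_coord z 1).mul (hasFDerivAt_coord z 2))).const_mul (2:ℝ)
      refine h.congr_fderiv ?_
      ext w; simp [rowD]; ring
    · show HasFDerivAt (fun x => hopfC x 2) (rowD z 2) z
      simp only [hopf2]
      have h := ((((hasFDerivAt_coord z 0).mul (hasFDerivAt_coord z 0)).add
        ((hasFDerivAt_coord z 1).mul (hasFDerivAt_coord z 1))).sub
        ((hasFDerivAt_coord z 2).mul (hasFDerivAt_coord z 2))).sub
        ((hasFDerivAt_coord z 3).mul (hasFDerivAt_coord z 3))
      refine h.congr_fderiv ?_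
      ext w; simp [rowD]; ring
  exact (((PiLp.continuousLinearEquiv 2 ℝ (fun _ : Fin 3 => ℝ)).symm :
      (Fin 3 → ℝ) →L[ℝ] EuclideanSpace ℝ (Fin 3)).hasFDerivAt (x := q z)).comp z key

noncomputable def DD : EuclideanSpace ℝ (Fin 4) →L[ℝ] (EuclideanSpace ℝ (Fin 4) →L[ℝ] EuclideanSpace ℝ (Fin 3)) :=
  LinearMap.toContinuousLinearMap
  { toFun := Dz
    map_add' := by
      intro x y; ext w i; fin_cases i <;>
        simp [ContinuousLinearMap.add_apply, PiLp.add_apply, Dz_apply, rowD] <;> ring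
    map_smul' := by
      intro c x; ext w i; fin_cases i <;>
        simp [ContinuousLinearMap.smul_apply, PiLp.smul_apply, Dz_apply, rowD,
          smul_eq_mul] <;> ring }

lemma hasFDerivAt_Dz (z : EuclideanSpace ℝ (Fin 4)) : HasFDerivAt (fun x => Dz x) DD z :=
  DD.hasFDerivAt

/-- Δ(v ∘ π)(z) = 4(|z₁|² + |z₂|²)·(Δv)(π(z)) = 4|π(z)|·(Δv)(π(z)). -/
theorem stmt_5 (V : Set (EuclideanSpace ℝ (Fin 3))) (hV : IsOpen V)
    (v : EuclideanSpace ℝ (Fin 3) → ℝ) (hv : ContDiffOn ℝ 2 v V)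
    (z : EuclideanSpace ℝ (Fin 4)) (hz : z ∈ hopfC ⁻¹' V) :
    lap (v ∘ hopfC) z =
      4 * (‖(⟨z 0, z 1⟩ : ℂ)‖ ^ 2 + ‖(⟨z 2, z 3⟩ : ℂ)‖ ^ 2) *
        lap v (hopfC z) ∧
    lap (v ∘ hopfC) z = 4 * ‖hopfC z‖ * lap v (hopfC z) := by
  have hp : hopfC z ∈ V := hz
  have hvp : ContDiffAt ℝ 2 v (hopfC z) := hv.contDiffAt (hV.mem_nhds hp)
  have hgd : DifferentiableAt ℝ (fderiv ℝ v) (hopfC z) :=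
    (hvp.fderiv_right (m := 1) (by norm_num)).differentiableAt one_ne_zero
  have hcont : Continuous hopfC := by
    rw [continuous_iff_continuousAt]; exact fun x => (hasFDerivAt_hopfC x).continuousAt
  have hUopen : IsOpen (hopfC ⁻¹' V) := hV.preimage hcont
  have heq : fderiv ℝ (v ∘ hopfC) =ᶠ[nhds z]
      (fun x => ((fderiv ℝ v) (hopfC x)).comp (Dz x)) := by
    filter_upwards [hUopen.mem_nhds hz] with x hx
    have hvx : DifferentiableAt ℝ v (hopfC x) :=
      (hv.contDiffAt (hV.mem_nhds hx)).differentiableAt two_ne_zero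
    rw [fderiv_comp x hvx (hasFDerivAt_hopfC x).differentiableAt, (hasFDerivAt_hopfC x).fderiv]
  have hc : HasFDerivAt (fun x => (fderiv ℝ v) (hopfC x))
      ((fderiv ℝ (fderiv ℝ v) (hopfC z)).comp (Dz z)) z :=
    (hgd.hasFDerivAt).comp z (hasFDerivAt_hopfC z)
  have hF := hc.clm_comp (hasFDerivAt_Dz z)
  have hsecond := (hF.congr_of_eventuallyEq heq).fderiv
  have key : ∀ i : Fin 4, iteratedFDeriv ℝ 2 (v ∘ hopfC) z
      ![EuclideanSpace.single i 1, EuclideanSpace.single i 1] =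
      fderiv ℝ (fderiv ℝ v) (hopfC z) (Dz z (EuclideanSpace.single i 1))
        (Dz z (EuclideanSpace.single i 1)) +
      fderiv ℝ v (hopfC z) (Dz (EuclideanSpace.single i 1) (EuclideanSpace.single i 1)) := by
    intro i
    rw [iteratedFDeriv_two_apply, hsecond]
    simp [ContinuousLinearMap.add_apply, ContinuousLinearMap.comp_apply,
      ContinuousLinearMap.flip_apply]
    exact add_comm _ _
  have hBexp : ∀ a b c a' b' c' : ℝ,
      fderiv ℝ (fderiv ℝ v) (hopfC z)
        (a • EuclideanSpace.single (0:Fin 3) (1:ℝ) + b • EuclideanSpace.single 1 1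
          + c • EuclideanSpace.single 2 1)
        (a' • EuclideanSpace.single (0:Fin 3) (1:ℝ) + b' • EuclideanSpace.single 1 1
          + c' • EuclideanSpace.single 2 1) =
      a*a' * fderiv ℝ (fderiv ℝ v) (hopfC z) (EuclideanSpace.single 0 1) (EuclideanSpace.single 0 1)
      + a*b' * fderiv ℝ (fderiv ℝ v) (hopfC z) (EuclideanSpace.single 0 1) (EuclideanSpace.single 1 1)
      + a*c' * fderiv ℝ (fderiv ℝ v) (hopfC z) (EuclideanSpace.single 0 1) (EuclideanSpace.single 2 1)
      + b*a' * fderiv ℝ (fderiv ℝ v) (hopfC z) (EuclideanSpace.single 1 1) (EuclideanSpace.single 0 1)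
      + b*b' * fderiv ℝ (fderiv ℝ v) (hopfC z) (EuclideanSpace.single 1 1) (EuclideanSpace.single 1 1)
      + b*c' * fderiv ℝ (fderiv ℝ v) (hopfC z) (EuclideanSpace.single 1 1) (EuclideanSpace.single 2 1)
      + c*a' * fderiv ℝ (fderiv ℝ v) (hopfC z) (EuclideanSpace.single 2 1) (EuclideanSpace.single 0 1)
      + c*b' * fderiv ℝ (fderiv ℝ v) (hopfC z) (EuclideanSpace.single 2 1) (EuclideanSpace.single 1 1)
      + c*c' * fderiv ℝ (fderiv ℝ v) (hopfC z) (EuclideanSpace.single 2 1) (EuclideanSpace.single 2 1) := by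
    intros a b c a' b' c'
    simp only [map_add, map_smul, ContinuousLinearMap.add_apply, ContinuousLinearMap.smul_apply,
      smul_eq_mul]
    ring
  have hw0 : Dz z (EuclideanSpace.single 0 1) =
      (2*z 2) • EuclideanSpace.single (0:Fin 3) (1:ℝ) + (2*z 3) • EuclideanSpace.single 1 1
        + (2*z 0) • EuclideanSpace.single 2 1 := by
    ext a; fin_cases a <;>
      simp [Dz_apply, rowD, EuclideanSpace.single_apply, PiLp.add_apply, PiLp.smul_apply]
  have hw1 : Dz z (EuclideanSpace.single 1 1) =
      (2*z 3) • EuclideanSpace.single (0:Fin 3) (1:ℝ) + (-(2*z 2)) • EuclideanSpace.single 1 1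
        + (2*z 1) • EuclideanSpace.single 2 1 := by
    ext a; fin_cases a <;>
      simp [Dz_apply, rowD, EuclideanSpace.single_apply, PiLp.add_apply, PiLp.smul_apply]
  have hw2 : Dz z (EuclideanSpace.single 2 1) =
      (2*z 0) • EuclideanSpace.single (0:Fin 3) (1:ℝ) + (-(2*z 1)) • EuclideanSpace.single 1 1
        + (-(2*z 2)) • EuclideanSpace.single 2 1 := by
    ext a; fin_cases a <;>
      simp [Dz_apply, rowD, EuclideanSpace.single_apply, PiLp.add_apply, PiLp.smul_apply]
  have hw3 : Dz z (EuclideanSpace.single 3 1) =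
      (2*z 1) • EuclideanSpace.single (0:Fin 3) (1:ℝ) + (2*z 0) • EuclideanSpace.single 1 1
        + (-(2*z 3)) • EuclideanSpace.single 2 1 := by
    ext a; fin_cases a <;>
      simp [Dz_apply, rowD, EuclideanSpace.single_apply, PiLp.add_apply, PiLp.smul_apply]
  have hd0 : Dz (EuclideanSpace.single 0 1) (EuclideanSpace.single 0 1) =
      (2:ℝ) • EuclideanSpace.single (2:Fin 3) (1:ℝ) := by
    ext a; fin_cases a <;>
      simp [Dz_apply, rowD, EuclideanSpace.single_apply, PiLp.smul_apply]
  have hd1 : Dz (EuclideanSpace.single 1 1) (EuclideanSpace.single 1 1) =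
      (2:ℝ) • EuclideanSpace.single (2:Fin 3) (1:ℝ) := by
    ext a; fin_cases a <;>
      simp [Dz_apply, rowD, EuclideanSpace.single_apply, PiLp.smul_apply]
  have hd2 : Dz (EuclideanSpace.single 2 1) (EuclideanSpace.single 2 1) =
      (-2:ℝ) • EuclideanSpace.single (2:Fin 3) (1:ℝ) := by
    ext a; fin_cases a <;>
      simp [Dz_apply, rowD, EuclideanSpace.single_apply, PiLp.smul_apply]
  have hd3 : Dz (EuclideanSpace.single 3 1) (EuclideanSpace.single 3 1) =
      (-2:ℝ) • EuclideanSpace.single (2:Fin 3) (1:ℝ) := by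
    ext a; fin_cases a <;>
      simp [Dz_apply, rowD, EuclideanSpace.single_apply, PiLp.smul_apply]
  have hlapv : lap v (hopfC z) =
      fderiv ℝ (fderiv ℝ v) (hopfC z) (EuclideanSpace.single 0 1) (EuclideanSpace.single 0 1)
      + fderiv ℝ (fderiv ℝ v) (hopfC z) (EuclideanSpace.single 1 1) (EuclideanSpace.single 1 1)
      + fderiv ℝ (fderiv ℝ v) (hopfC z) (EuclideanSpace.single 2 1) (EuclideanSpace.single 2 1) := by
    simp only [lap, Fin.sum_univ_three, iteratedFDeriv_two_apply, Matrix.cons_val_zero,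
      Matrix.cons_val_one, Matrix.head_cons]
  have main : lap (v ∘ hopfC) z = 4 * (z 0^2 + z 1^2 + z 2^2 + z 3^2) * lap v (hopfC z) := by
    rw [hlapv]
    simp only [lap, Fin.sum_univ_four]
    rw [key 0, key 1, key 2, key 3, hw0, hw1, hw2, hw3, hd0, hd1, hd2, hd3,
      hBexp, hBexp, hBexp, hBexp]
    simp only [map_smul, smul_eq_mul]
    ring
  have habs : ‖(⟨z 0, z 1⟩:ℂ)‖^2 + ‖(⟨z 2, z 3⟩:ℂ)‖^2
      = z 0^2 + z 1^2 + z 2^2 + z 3^2 := by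
    simp [Complex.sq_norm, Complex.normSq_mk]; ring
  have hnorm : ‖hopfC z‖ = z 0^2 + z 1^2 + z 2^2 + z 3^2 := by
    rw [EuclideanSpace.norm_eq]
    rw [show (∑ i, ‖hopfC z i‖^2) = (z 0^2 + z 1^2 + z 2^2 + z 3^2)^2 by
      rw [Fin.sum_univ_three]
      simp only [hopf0, hopf1, hopf2, Real.norm_eq_abs, sq_abs]
      ring]
    exact Real.sqrt_sq (by positivity)
  exact ⟨by rw [habs]; exact main, by rw [hnorm]; exact main⟩
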